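/- Let F be a Borel probability measure on ℝ^d whose support is not contained in any straight line of ℝ^d, and assume F({z}) = 0 for the given point z ∈ ℝ^d. Then the spatial quantile index U_F(z) = E_{X∼F}[(z − X)/‖z − X‖] satisfies ‖U_F(z)‖ < 1; that is, the quantile index function takes values in the open Euclidean unit ball. -/

import Mathlib

open scoped Classical

open MeasureTheory

/-- If the support of a Borel probability measure `F` on `ℝ^d` is not contained
in any straight line (equivalently, every straight line has `F`-measure `< 1`) and
`F {z} = 0`, then the spatial quantile index `U_F(z) = E_{X∼F}[(z - X)/‖z - X‖]` has norm
`< 1`. -/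
theorem stmt_6 {d : ℕ} (F : Measure (EuclideanSpace ℝ (Fin d)))
    [IsProbabilityMeasure F]
    (hline : ∀ a v : EuclideanSpace ℝ (Fin d),
      F {x : EuclideanSpace ℝ (Fin d) | ∃ t : ℝ, x = a + t • v} < 1)
    (z : EuclideanSpace ℝ (Fin d)) (hz : F {z} = 0) :
    ‖∫ x, (if x = z then 0 else ‖z - x‖⁻¹ • (z - x)) ∂F‖ < 1 := by
  set f : EuclideanSpace ℝ (Fin d) → EuclideanSpace ℝ (Fin d) :=
    fun x => if x = z then 0 else ‖z - x‖⁻¹ • (z - x) with hfdef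
  have hmeas : Measurable f := by
    apply Measurable.ite (measurableSet_singleton z) measurable_const
    exact ((measurable_const.sub measurable_id).norm.inv).smul
      (measurable_const.sub measurable_id)
  have hnorm : ∀ x, ‖f x‖ ≤ 1 := by
    intro x
    by_cases hx : x = z
    · simp [hfdef, hx]
    · have hzx : z - x ≠ 0 := sub_ne_zero.mpr (Ne.symm hx)
      have : ‖f x‖ = 1 := by
        simp only [hfdef, if_neg hx, norm_smul, norm_inv, norm_norm]
        exact inv_mul_cancel₀ (norm_ne_zero_iff.mpr hzx)
      simp [this]
  have hint : Integrable f F := by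
    refine (integrable_const (1 : ℝ)).mono' hmeas.aestronglyMeasurable ?_
    filter_upwards with x using hnorm x
  by_contra hcon
  push_neg at hcon
  set I := ∫ x, f x ∂F with hI
  have hIpos : (0 : ℝ) < ‖I‖ := lt_of_lt_of_le one_pos hcon
  -- the function ‖I‖ - ⟪I, f x⟫ is nonneg with nonpositive integral, hence a.e. zero
  have hg : Integrable (fun x => ‖I‖ - (inner ℝ I (f x) : ℝ)) F :=
    (integrable_const _).sub (hint.const_inner I)
  have hgnonneg : ∀ x, 0 ≤ ‖I‖ - (inner ℝ I (f x) : ℝ) := by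
    intro x
    have h1 : (inner ℝ I (f x) : ℝ) ≤ ‖I‖ * ‖f x‖ := real_inner_le_norm I (f x)
    have h2 : ‖I‖ * ‖f x‖ ≤ ‖I‖ * 1 := by
      exact mul_le_mul_of_nonneg_left (hnorm x) (le_of_lt hIpos)
    linarith
  have hgint : ∫ x, (‖I‖ - (inner ℝ I (f x) : ℝ)) ∂F = ‖I‖ - ‖I‖ ^ 2 := by
    rw [integral_sub (integrable_const _) (hint.const_inner I), integral_inner hint,
      real_inner_self_eq_norm_sq, integral_const]
    simp
  have hgle : ∫ x, (‖I‖ - (inner ℝ I (f x) : ℝ)) ∂F ≤ 0 := by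
    rw [hgint]; nlinarith
  have hgzero : ∫ x, (‖I‖ - (inner ℝ I (f x) : ℝ)) ∂F = 0 :=
    le_antisymm hgle (integral_nonneg hgnonneg)
  have hae : (fun x => ‖I‖ - (inner ℝ I (f x) : ℝ)) =ᵐ[F] 0 :=
    (integral_eq_zero_iff_of_nonneg hgnonneg hg).mp hgzero
  -- deduce f x = u a.e. with u the unit vector in direction I
  set u : EuclideanSpace ℝ (Fin d) := ‖I‖⁻¹ • I with hu
  have haefu : ∀ᵐ x ∂F, f x = u := by
    filter_upwards [hae] with x hx
    have hgx : (inner ℝ I (f x) : ℝ) = ‖I‖ := by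
      simp only [Pi.zero_apply] at hx; linarith
    have hfx1 : ‖f x‖ = 1 := by
      have h1 : ‖I‖ ≤ ‖I‖ * ‖f x‖ := hgx ▸ real_inner_le_norm I (f x)
      have : (1 : ℝ) ≤ ‖f x‖ := by
        by_contra hlt
        push_neg at hlt
        nlinarith
      linarith [hnorm x]
    have heq : (inner ℝ I (f x) : ℝ) = ‖I‖ * ‖f x‖ := by rw [hgx, hfx1, mul_one]
    have := inner_eq_norm_mul_iff_real.mp heq
    rw [hfx1, one_smul] at this
    have hc : ‖I‖⁻¹ • (‖I‖ • f x) = f x := by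
      rw [smul_smul, inv_mul_cancel₀ (ne_of_gt hIpos), one_smul]
    show f x = ‖I‖⁻¹ • I
    nth_rewrite 2 [this]
    exact hc.symm
  -- a.e. points lie on the line through z with direction u
  set L : Set (EuclideanSpace ℝ (Fin d)) := {x | ∃ t : ℝ, x = z + t • u} with hL
  have hsub : ∀ᵐ x ∂F, x ∈ L := by
    filter_upwards [haefu] with x hx
    by_cases hxz : x = z
    · exact ⟨0, by simp [hxz]⟩
    · simp only [hfdef, if_neg hxz] at hx
      refine ⟨-‖z - x‖, ?_⟩
      have hzx : z - x ≠ 0 := sub_ne_zero.mpr (Ne.symm hxz)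
      have : z - x = ‖z - x‖ • u := by
        rw [← hx, smul_smul, mul_inv_cancel₀ (norm_ne_zero_iff.mpr hzx), one_smul]
      have := this
      rw [neg_smul, ← this]
      abel
  have hL1 : F L = 1 := by
    have hcompl : F Lᶜ = 0 := by
      simpa [Set.compl_def] using ae_iff.mp hsub
    have : (1 : ENNReal) = F Set.univ := (measure_univ).symm
    have hle : F Set.univ ≤ F L + F Lᶜ := by
      rw [← Set.union_compl_self L] at this ⊢
      exact measure_union_le L Lᶜ
    rw [hcompl, add_zero] at hle
    exact le_antisymm (by rw [← measure_univ (μ := F)]; exact measure_mono (Set.subset_univ L)) (this ▸ hle)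
  exact absurd hL1 (ne_of_lt (hline z u))
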